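/- arXiv:1908.06390 — 3 statements merged into one kernel-verified Lean document; each statement's English description precedes it below -/
import Mathlib

section
/- Let B, G, R be pairwise disjoint sets of n points each with B ∪ G in general position, such that every line through a point b ∈ B and a point g ∈ G contains a point r ∈ R not lying between b and g. Then every line through two points of different colors (from B ∪ G ∪ R) contains exactly one point of the third color. -/
abbrev Pt := Fin 2 → ℝ

def GenPos (S : Set Pt) : Prop :=
  ∀ x ∈ S, ∀ y ∈ S, ∀ z ∈ S, x ≠ y → x ≠ z → y ≠ z → ¬ Collinear ℝ ({x, y, z} : Set Pt)

lemma col_sub {x y z x' y' z' : Pt} (h : Collinear ℝ ({x, y, z} : Set Pt))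
    (hx : x' = x ∨ x' = y ∨ x' = z) (hy : y' = x ∨ y' = y ∨ y' = z)
    (hz : z' = x ∨ z' = y ∨ z' = z) : Collinear ℝ ({x', y', z'} : Set Pt) := by
  refine h.subset ?_
  intro a ha
  simp only [Set.mem_insert_iff, Set.mem_singleton_iff] at ha ⊢
  rcases ha with h | h | h <;> subst h <;> tauto

lemma col_merge {b r g g' : Pt} (hbr : b ≠ r)
    (h1 : Collinear ℝ ({b, g, r} : Set Pt)) (h2 : Collinear ℝ ({b, g', r} : Set Pt)) :
    Collinear ℝ ({b, g, g'} : Set Pt) := by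
  have hg : g ∈ line[ℝ, b, r] :=
    h1.mem_affineSpan_of_mem_of_ne (by simp) (by simp) (by simp) hbr
  have hg' : g' ∈ line[ℝ, b, r] :=
    h2.mem_affineSpan_of_mem_of_ne (by simp) (by simp) (by simp) hbr
  have h4 : Collinear ℝ ({g, g', b, r} : Set Pt) :=
    collinear_insert_insert_of_mem_affineSpan_pair hg hg'
  refine h4.subset ?_
  intro x hx
  simp only [Set.mem_insert_iff, Set.mem_singleton_iff] at hx ⊢
  tauto

theorem stmt13 (n : ℕ) (B G R : Finset Pt)
    (hB : B.card = n) (hG : G.card = n) (hR : R.card = n)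
    (hBG : Disjoint B G) (hBR : Disjoint B R) (hGR : Disjoint G R)
    (hgp : GenPos ↑(B ∪ G))
    (hpierce : ∀ b ∈ B, ∀ g ∈ G, ∃ r ∈ R,
      Collinear ℝ ({b, g, r} : Set Pt) ∧ r ∉ segment ℝ b g) :
    (∀ b ∈ B, ∀ g ∈ G, ∃! r : Pt, r ∈ R ∧ Collinear ℝ ({b, g, r} : Set Pt)) ∧
    (∀ b ∈ B, ∀ r ∈ R, ∃! g : Pt, g ∈ G ∧ Collinear ℝ ({b, r, g} : Set Pt)) ∧
    (∀ g ∈ G, ∀ r ∈ R, ∃! b : Pt, b ∈ B ∧ Collinear ℝ ({g, r, b} : Set Pt)) := by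
  classical
  -- basic disequalities
  have hbg : ∀ b ∈ B, ∀ g ∈ G, b ≠ g := fun b hb g hg h =>
    (Finset.disjoint_left.mp hBG hb) (h ▸ hg)
  have hbr : ∀ b ∈ B, ∀ r ∈ R, b ≠ r := fun b hb r hr h =>
    (Finset.disjoint_left.mp hBR hb) (h ▸ hr)
  have hgr : ∀ g ∈ G, ∀ r ∈ R, g ≠ r := fun g hg r hr h =>
    (Finset.disjoint_left.mp hGR hg) (h ▸ hr)
  -- general position applied
  have hgp3 : ∀ x ∈ B ∪ G, ∀ y ∈ B ∪ G, ∀ z ∈ B ∪ G, x ≠ y → x ≠ z → y ≠ z →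
      ¬ Collinear ℝ ({x, y, z} : Set Pt) := by
    intro x hx y hy z hz
    exact hgp x (by exact_mod_cast hx) y (by exact_mod_cast hy) z (by exact_mod_cast hz)
  -- the key uniqueness: for b ∈ B, r with b ≠ r, at most one g ∈ G collinear
  have uniqG : ∀ b ∈ B, ∀ r : Pt, b ≠ r → ∀ g ∈ G, ∀ g' ∈ G,
      Collinear ℝ ({b, g, r} : Set Pt) → Collinear ℝ ({b, g', r} : Set Pt) → g = g' := by
    intro b hb r hbr' g hg g' hg' h1 h2
    by_contra hne
    exact hgp3 b (Finset.mem_union_left _ hb) g (Finset.mem_union_right _ hg)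
      g' (Finset.mem_union_right _ hg') (hbg b hb g hg) (hbg b hb g' hg') hne
      (col_merge hbr' h1 h2)
  have uniqB : ∀ g ∈ G, ∀ r : Pt, g ≠ r → ∀ b ∈ B, ∀ b' ∈ B,
      Collinear ℝ ({b, g, r} : Set Pt) → Collinear ℝ ({b', g, r} : Set Pt) → b = b' := by
    intro g hg r hgr' b hb b' hb' h1 h2
    by_contra hne
    have h1' : Collinear ℝ ({g, b, r} : Set Pt) := col_sub h1 (by tauto) (by tauto) (by tauto)
    have h2' : Collinear ℝ ({g, b', r} : Set Pt) := col_sub h2 (by tauto) (by tauto) (by tauto)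
    exact hgp3 g (Finset.mem_union_right _ hg) b (Finset.mem_union_left _ hb)
      b' (Finset.mem_union_left _ hb') (Ne.symm (hbg b hb g hg)) (Ne.symm (hbg b' hb' g hg)) hne
      (col_merge hgr' h1' h2')
  -- counting sets
  set S : Pt → Finset (Pt × Pt) :=
    fun r => (B ×ˢ G).filter (fun p => Collinear ℝ ({p.1, p.2, r} : Set Pt)) with hS
  set T : Pt × Pt → Finset Pt :=
    fun p => R.filter (fun r => Collinear ℝ ({p.1, p.2, r} : Set Pt)) with hT
  -- injectivity of fst on S r
  have injS : ∀ r ∈ R, ∀ p ∈ S r, ∀ q ∈ S r, p.1 = q.1 → p = q := by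
    intro r hr p hp q hq h1
    simp only [hS, Finset.mem_filter, Finset.mem_product] at hp hq
    have := uniqG p.1 hp.1.1 r (hbr p.1 hp.1.1 r hr) p.2 hp.1.2 q.2 hq.1.2 hp.2 (h1 ▸ hq.2)
    exact Prod.ext h1 this
  have injS2 : ∀ r ∈ R, ∀ p ∈ S r, ∀ q ∈ S r, p.2 = q.2 → p = q := by
    intro r hr p hp q hq h2
    simp only [hS, Finset.mem_filter, Finset.mem_product] at hp hq
    have := uniqB p.2 hp.1.2 r (hgr p.2 hp.1.2 r hr) p.1 hp.1.1 q.1 hq.1.1 hp.2 (h2 ▸ hq.2)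
    exact Prod.ext this h2
  -- card bounds
  have cardS_le : ∀ r ∈ R, (S r).card ≤ n := by
    intro r hr
    calc (S r).card ≤ B.card := Finset.card_le_card_of_injOn Prod.fst
          (fun p hp => by
            simp only [hS, Finset.mem_coe, Finset.mem_filter, Finset.mem_product] at hp; exact hp.1.1)
          (fun p hp q hq h => injS r hr p hp q hq h)
      _ = n := hB
  have cardT_ge : ∀ p ∈ B ×ˢ G, 1 ≤ (T p).card := by
    intro p hp
    rw [Finset.mem_product] at hp
    obtain ⟨r, hr, hcol, -⟩ := hpierce p.1 hp.1 p.2 hp.2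
    exact Finset.card_pos.mpr ⟨r, by simp [hT, hr, hcol]⟩
  -- double counting
  have hsum : ∑ p ∈ B ×ˢ G, (T p).card = ∑ r ∈ R, (S r).card := by
    simp only [hS, hT, Finset.card_filter]
    exact Finset.sum_comm
  have hge : n * n ≤ ∑ p ∈ B ×ˢ G, (T p).card := by
    calc n * n = ∑ _p ∈ B ×ˢ G, 1 := by
          simp [Finset.card_product, hB, hG]
      _ ≤ ∑ p ∈ B ×ˢ G, (T p).card := Finset.sum_le_sum cardT_ge
  have hle : ∑ r ∈ R, (S r).card ≤ n * n := by
    calc ∑ r ∈ R, (S r).card ≤ ∑ _r ∈ R, n := Finset.sum_le_sum cardS_le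
      _ = n * n := by simp [hR]
  have heq : ∑ p ∈ B ×ˢ G, (T p).card = n * n := le_antisymm (hsum ▸ hle) hge
  have heq2 : ∑ r ∈ R, (S r).card = n * n := hsum ▸ heq
  -- pointwise equalities
  have cardT1 : ∀ p ∈ B ×ˢ G, (T p).card = 1 := by
    have h := (Finset.sum_eq_sum_iff_of_le cardT_ge).mp ?_
    · exact fun p hp => (h p hp).symm
    · rw [heq]; simp [Finset.card_product, hB, hG]
  have cardSn : ∀ r ∈ R, (S r).card = n := by
    have h := (Finset.sum_eq_sum_iff_of_le cardS_le).mp ?_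
    · exact h
    · rw [heq2]; simp [hR]
  constructor
  · -- part 1
    intro b hb g hg
    have hp : (b, g) ∈ B ×ˢ G := Finset.mem_product.mpr ⟨hb, hg⟩
    obtain ⟨a, ha⟩ := Finset.card_eq_one.mp (cardT1 _ hp)
    have haa : a ∈ T (b, g) := ha ▸ Finset.mem_singleton_self a
    simp only [hT, Finset.mem_filter] at haa
    refine ⟨a, ⟨haa.1, haa.2⟩, ?_⟩
    intro r ⟨hr, hcol⟩
    have : r ∈ T (b, g) := by simp [hT, hr, hcol]
    rw [ha, Finset.mem_singleton] at this
    exact this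
  constructor
  · -- part 2
    intro b hb r hr
    -- image of fst on S r is all of B
    have himg : (S r).image Prod.fst = B := by
      apply Finset.eq_of_subset_of_card_le
      · intro x hx
        obtain ⟨p, hp, hpe⟩ := Finset.mem_image.mp hx
        simp only [hS, Finset.mem_filter, Finset.mem_product] at hp
        exact hpe ▸ hp.1.1
      · rw [Finset.card_image_of_injOn (fun p hp q hq h => injS r hr p hp q hq h),
          cardSn r hr, hB]
    have hbmem : b ∈ (S r).image Prod.fst := himg ▸ hb
    obtain ⟨p, hp, hpe⟩ := Finset.mem_image.mp hbmem
    simp only [hS, Finset.mem_filter, Finset.mem_product] at hp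
    refine ⟨p.2, ⟨hp.1.2, ?_⟩, ?_⟩
    · exact col_sub (hpe ▸ hp.2) (by tauto) (by tauto) (by tauto)
    · intro g' ⟨hg', hcol'⟩
      have h1 : Collinear ℝ ({b, g', r} : Set Pt) :=
        col_sub hcol' (by tauto) (by tauto) (by tauto)
      have h2 : Collinear ℝ ({b, p.2, r} : Set Pt) := hpe ▸ hp.2
      exact uniqG b hb r (hbr b hb r hr) g' hg' p.2 hp.1.2 h1 h2
  · -- part 3
    intro g hg r hr
    have himg : (S r).image Prod.snd = G := by
      apply Finset.eq_of_subset_of_card_le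
      · intro x hx
        obtain ⟨p, hp, hpe⟩ := Finset.mem_image.mp hx
        simp only [hS, Finset.mem_filter, Finset.mem_product] at hp
        exact hpe ▸ hp.1.2
      · rw [Finset.card_image_of_injOn (fun p hp q hq h => injS2 r hr p hp q hq h),
          cardSn r hr, hG]
    have hgmem : g ∈ (S r).image Prod.snd := himg ▸ hg
    obtain ⟨p, hp, hpe⟩ := Finset.mem_image.mp hgmem
    simp only [hS, Finset.mem_filter, Finset.mem_product] at hp
    refine ⟨p.1, ⟨hp.1.1, ?_⟩, ?_⟩
    · exact col_sub (hpe ▸ hp.2) (by tauto) (by tauto) (by tauto)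
    · intro b' ⟨hb', hcol'⟩
      have h1 : Collinear ℝ ({b', g, r} : Set Pt) :=
        col_sub hcol' (by tauto) (by tauto) (by tauto)
      have h2 : Collinear ℝ ({p.1, g, r} : Set Pt) := hpe ▸ hp.2
      exact uniqB g hg r (hgr g hg r hr) b' hb' p.1 hp.1.1 h1 h2
end

section
/- Let B, G, R be pairwise disjoint sets of n points each, B ∪ G in general position, with every line through b ∈ B and g ∈ G containing a point of R outside segment [b, g]. Then the convex hull boundary of B ∪ G contains points of both colors. -/
namespace Stmt14Aux
noncomputable section




def dot (u v : Pt) : ℝ := u 0 * v 0 + u 1 * v 1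

lemma dot_lin (a : Pt) : IsLinearMap ℝ (fun p => dot a p) := by
  constructor
  · intro x y; simp [dot, Pi.add_apply]; ring
  · intro c x; simp [dot, Pi.smul_apply, smul_eq_mul]; ring

lemma dot_sub (a u v : Pt) : dot a (u - v) = dot a u - dot a v := by
  simp [dot, Pi.sub_apply]; ring

lemma ext2 {u v : Pt} (h0 : u 0 = v 0) (h1 : u 1 = v 1) : u = v := by
  funext i; fin_cases i <;> assumption

lemma ne_iff2 {u v : Pt} : u ≠ v ↔ u 0 ≠ v 0 ∨ u 1 ≠ v 1 := by
  constructor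
  · intro h; by_contra hc; push_neg at hc; exact h (ext2 hc.1 hc.2)
  · rintro (h | h) rfl <;> simp at h

lemma ne_zero_iff2 {u : Pt} : u ≠ 0 ↔ u 0 ≠ 0 ∨ u 1 ≠ 0 := by
  simpa using (ne_iff2 (u := u) (v := 0))

lemma para {a u v : Pt} (ha : a ≠ 0) (h1 : dot a u = 0) (h2 : dot a v = 0)
    (hu : u ≠ 0) : ∃ t : ℝ, v = t • u := by
  have e1 : a 0 * u 0 + a 1 * u 1 = 0 := h1
  have e2 : a 0 * v 0 + a 1 * v 1 = 0 := h2
  have hcross : u 0 * v 1 - u 1 * v 0 = 0 := by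
    rcases ne_zero_iff2.1 ha with h | h
    · have key : a 0 * (u 0 * v 1 - u 1 * v 0) = 0 := by
        linear_combination v 1 * e1 - u 1 * e2
      rcases mul_eq_zero.1 key with h' | h'
      · exact absurd h' h
      · exact h'
    · have key : a 1 * (u 0 * v 1 - u 1 * v 0) = 0 := by
        linear_combination u 0 * e2 - v 0 * e1
      rcases mul_eq_zero.1 key with h' | h'
      · exact absurd h' h
      · exact h'
  rcases ne_zero_iff2.1 hu with h | h
  · refine ⟨v 0 / u 0, ext2 ?_ ?_⟩
    · simp only [Pi.smul_apply, smul_eq_mul]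
      rw [div_mul_cancel₀ _ h]
    · simp only [Pi.smul_apply, smul_eq_mul]
      rw [div_mul_eq_mul_div, eq_comm, div_eq_iff h]
      linear_combination -hcross
  · refine ⟨v 1 / u 1, ext2 ?_ ?_⟩
    · simp only [Pi.smul_apply, smul_eq_mul]
      rw [div_mul_eq_mul_div, eq_comm, div_eq_iff h]
      linear_combination hcross
    · simp only [Pi.smul_apply, smul_eq_mul]
      rw [div_mul_cancel₀ _ h]





lemma collinear_param {a b c : Pt} (hab : a ≠ b) (h : Collinear ℝ ({a, b, c} : Set Pt)) :
    ∃ t : ℝ, c - a = t • (b - a) := by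
  rw [collinear_iff_of_mem (Set.mem_insert a {b, c})] at h
  obtain ⟨v, hv⟩ := h
  obtain ⟨rb, hrb⟩ := hv b (by simp)
  obtain ⟨rc, hrc⟩ := hv c (by simp)
  have hb : b - a = rb • v := by rw [hrb]; simp [vadd_eq_add]
  have hc : c - a = rc • v := by rw [hrc]; simp [vadd_eq_add]
  have hrb0 : rb ≠ 0 := by
    rintro rfl
    apply hab
    have : b - a = 0 := by rw [hb]; simp
    have := sub_eq_zero.mp this; exact this.symm ▸ rfl
  refine ⟨rc / rb, ?_⟩
  rw [hc, hb, smul_smul, div_mul_cancel₀ _ hrb0]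

lemma collinear_of_param {a b c : Pt} (t : ℝ) (h : c - a = t • (b - a)) :
    Collinear ℝ ({a, b, c} : Set Pt) := by
  rw [collinear_iff_of_mem (Set.mem_insert a {b, c})]
  refine ⟨b - a, ?_⟩
  intro p hp
  rcases hp with rfl | rfl | rfl
  · exact ⟨0, by simp [vadd_eq_add]⟩
  · exact ⟨1, by simp [vadd_eq_add]⟩
  · exact ⟨t, by rw [← h]; simp [vadd_eq_add]⟩

lemma mem_segment_of_nonpos {x y r : Pt} (t : ℝ) (ht : t ≤ 0) (h : y - r = t • (x - r)) :
    r ∈ segment ℝ x y := by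
  have h1t : (0:ℝ) < 1 - t := by linarith
  refine ⟨-t / (1 - t), 1 / (1 - t), div_nonneg (by linarith) h1t.le, by positivity, ?_, ?_⟩
  · field_simp; ring
  · have key : (-t / (1 - t)) • x + (1 / (1 - t)) • y - r
        = (1 / (1 - t)) • ((y - r) - t • (x - r)) := by
      match_scalars <;> field_simp <;> ring
    have hz : (-t / (1 - t)) • x + (1 / (1 - t)) • y - r = 0 := by
      rw [key, h]; simp
    exact sub_eq_zero.mp hz

lemma sameside {x y r : Pt} (hxr : x ≠ r) (hcol : Collinear ℝ ({r, x, y} : Set Pt))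
    (hseg : r ∉ segment ℝ x y) : ∃ t : ℝ, 0 < t ∧ y - r = t • (x - r) := by
  obtain ⟨t, ht⟩ := collinear_param (Ne.symm hxr) hcol
  refine ⟨t, ?_, ht⟩
  by_contra hle
  push_neg at hle
  exact hseg (mem_segment_of_nonpos t hle ht)




lemma tri₁ (a b c : Pt) : ({a, b, c} : Set Pt) = {c, a, b} := by ext x; simp; tauto
lemma tri₂ (a b c : Pt) : ({a, b, c} : Set Pt) = {a, c, b} := by ext x; simp; tauto

lemma matching {n : ℕ} (hn : 2 ≤ n) (B G R : Finset Pt)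
    (hB : B.card = n) (hG : G.card = n) (hR : R.card = n)
    (hBG : Disjoint B G) (hBR : Disjoint B R) (hGR : Disjoint G R)
    (hgp : GenPos ↑(B ∪ G))
    (hpierce : ∀ b ∈ B, ∀ g ∈ G, ∃ r ∈ R,
      Collinear ℝ ({b, g, r} : Set Pt) ∧ r ∉ segment ℝ b g) :
    ∀ r ∈ R, ∀ x ∈ B ∪ G, ∃ y ∈ B ∪ G, y ≠ x ∧ Collinear ℝ ({r, x, y} : Set Pt) ∧
      ((x ∈ B ∧ y ∈ G) ∨ (x ∈ G ∧ y ∈ B)) ∧ r ∉ segment ℝ x y := by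
  classical
  set S : Finset Pt := B ∪ G with hS
  have hScard : S.card = 2 * n := by
    rw [hS, Finset.card_union_of_disjoint hBG, hB, hG]; ring
  have hrS : ∀ r ∈ R, r ∉ S := by
    intro r hr hmem
    rcases Finset.mem_union.mp hmem with h | h
    · exact (Finset.disjoint_left.mp hBR h) hr
    · exact (Finset.disjoint_left.mp hGR h) hr
  -- classes
  set cls : Pt → Pt → Finset Pt :=
    fun r x => S.filter (fun y => Collinear ℝ ({r, x, y} : Set Pt)) with hcls
  have hself : ∀ r, ∀ x ∈ S, x ∈ cls r x := by
    intro r x hx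
    rw [hcls]
    refine Finset.mem_filter.mpr ⟨hx, ?_⟩
    have : ({r, x, x} : Set Pt) = {r, x} := by simp
    rw [this]; exact collinear_pair ℝ r x
  have hsub : ∀ r x, cls r x ⊆ S := fun r x => Finset.filter_subset _ _
  have htrans : ∀ r ∈ R, ∀ x ∈ S, ∀ y ∈ S, ∀ z : Pt,
      Collinear ℝ ({r, x, y} : Set Pt) → Collinear ℝ ({r, x, z} : Set Pt) →
      Collinear ℝ ({r, y, z} : Set Pt) := by
    intro r hr x hx y hy z hxy hxz
    have hrx : r ≠ x := fun h => hrS r hr (h ▸ hx)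
    have hry : r ≠ y := fun h => hrS r hr (h ▸ hy)
    obtain ⟨s, hs⟩ := collinear_param hrx hxy
    obtain ⟨t, ht⟩ := collinear_param hrx hxz
    have hs0 : s ≠ 0 := by
      rintro rfl
      simp only [zero_smul] at hs
      exact hry (sub_eq_zero.mp hs).symm
    refine collinear_of_param (t / s) ?_
    rw [hs, smul_smul, div_mul_cancel₀ _ hs0, ht]
  have heqcls : ∀ r ∈ R, ∀ x ∈ S, ∀ y, y ∈ cls r x → cls r x = cls r y := by
    intro r hr x hx y hy
    have hyS : y ∈ S := hsub r x hy
    have hxy : Collinear ℝ ({r, x, y} : Set Pt) := (Finset.mem_filter.mp hy).2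
    have hyx : Collinear ℝ ({r, y, x} : Set Pt) := by rw [tri₂]; exact hxy
    ext z
    simp only [hcls, Finset.mem_filter]
    constructor
    · rintro ⟨hzS, hz⟩
      exact ⟨hzS, htrans r hr x hx y hyS z hxy hz⟩
    · rintro ⟨hzS, hz⟩
      exact ⟨hzS, htrans r hr y hyS x hx z hyx hz⟩
  have hcard2 : ∀ r ∈ R, ∀ x ∈ S, (cls r x).card ≤ 2 := by
    intro r hr x hx
    by_contra hgt
    push_neg at hgt
    obtain ⟨a, ha, b, hb, c, hc, hab, hac, hbc⟩ := Finset.two_lt_card.mp hgt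
    have hrx : r ≠ x := fun h => hrS r hr (h ▸ hx)
    obtain ⟨ta, hta⟩ := collinear_param hrx (Finset.mem_filter.mp ha).2
    obtain ⟨tb, htb⟩ := collinear_param hrx (Finset.mem_filter.mp hb).2
    obtain ⟨tc, htc⟩ := collinear_param hrx (Finset.mem_filter.mp hc).2
    have hcol : Collinear ℝ ({a, b, c} : Set Pt) := by
      rw [collinear_iff_of_mem (Set.mem_insert a {b, c})]
      refine ⟨x - r, ?_⟩
      intro p hp
      rcases hp with rfl | rfl | rfl
      · exact ⟨0, by simp [vadd_eq_add]⟩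
      · refine ⟨tb - ta, ?_⟩
        have : p - a = (tb - ta) • (x - r) := by
          rw [sub_smul, ← hta, ← htb]; abel
        rw [vadd_eq_add, ← this]; abel
      · refine ⟨tc - ta, ?_⟩
        have : p - a = (tc - ta) • (x - r) := by
          rw [sub_smul, ← hta, ← htc]; abel
        rw [vadd_eq_add, ← this]; abel
    exact hgp a (Finset.mem_coe.mpr (hsub r x ha)) b (Finset.mem_coe.mpr (hsub r x hb))
      c (Finset.mem_coe.mpr (hsub r x hc)) hab hac hbc hcol
  set Pr : Pt → Finset (Pt × Pt) := fun r => (B ×ˢ G).filter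
    (fun p => Collinear ℝ ({p.1, p.2, r} : Set Pt) ∧ r ∉ segment ℝ p.1 p.2) with hPr
  set T : Pt → Finset (Finset Pt) := fun r => S.image (cls r) with hT
  set T₂ : Pt → Finset (Finset Pt) := fun r => (T r).filter (fun c => c.card = 2) with hT₂
  have hsumT : ∀ r ∈ R, ∑ c ∈ T r, c.card = 2 * n := by
    intro r hr
    have h1 : S.card = ∑ c ∈ T r, (S.filter (fun x => cls r x = c)).card :=
      Finset.card_eq_sum_card_fiberwise (fun x hx => Finset.mem_image_of_mem _ hx)
    have h2 : ∀ c ∈ T r, S.filter (fun x => cls r x = c) = c := by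
      intro c hc
      obtain ⟨x₀, hx₀, rfl⟩ := Finset.mem_image.mp hc
      ext z
      simp only [Finset.mem_filter]
      constructor
      · rintro ⟨hzS, hz⟩
        rw [← hz]; exact hself r z hzS
      · intro hz
        exact ⟨hsub r x₀ hz, (heqcls r hr x₀ hx₀ z hz).symm⟩
    rw [← hScard, h1]
    exact Finset.sum_congr rfl (fun c hc => by rw [h2 c hc])
  have hT₂card : ∀ r ∈ R, (T₂ r).card ≤ n := by
    intro r hr
    have h1 : ∑ c ∈ T₂ r, c.card = 2 * (T₂ r).card := by
      rw [hT₂, Finset.sum_congr rfl (fun c hc => (Finset.mem_filter.mp hc).2)]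
      simp [mul_comm]
    have h2 : ∑ c ∈ T₂ r, c.card ≤ ∑ c ∈ T r, c.card :=
      Finset.sum_le_sum_of_subset (Finset.filter_subset _ _)
    rw [h1, hsumT r hr] at h2
    omega
  have hπ : ∀ r ∈ R, ∀ p ∈ Pr r, cls r p.1 ∈ T₂ r ∧ cls r p.1 = {p.1, p.2} := by
    intro r hr p hp
    obtain ⟨hpBG, hcol, hseg⟩ := Finset.mem_filter.mp hp
    obtain ⟨hpB, hpG⟩ := Finset.mem_product.mp hpBG
    have hb : p.1 ∈ S := Finset.mem_union_left _ hpB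
    have hg : p.2 ∈ S := Finset.mem_union_right _ hpG
    have hne : p.1 ≠ p.2 := by
      rintro h
      exact (Finset.disjoint_left.mp hBG hpB) (h ▸ hpG)
    have hgmem : p.2 ∈ cls r p.1 := by
      refine Finset.mem_filter.mpr ⟨hg, ?_⟩
      rw [tri₁ p.1 p.2 r] at hcol; exact hcol
    have hsubpair : ({p.1, p.2} : Finset Pt) ⊆ cls r p.1 := by
      intro z hz
      rcases Finset.mem_insert.mp hz with h | h
      · rw [h]; exact hself r p.1 hb
      · rw [Finset.mem_singleton.mp h]; exact hgmem
    have hpaircard : ({p.1, p.2} : Finset Pt).card = 2 := Finset.card_pair hne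
    have hclseq : ({p.1, p.2} : Finset Pt) = cls r p.1 :=
      Finset.eq_of_subset_of_card_le hsubpair (by rw [hpaircard]; exact hcard2 r hr p.1 hb)
    exact ⟨Finset.mem_filter.mpr ⟨Finset.mem_image_of_mem _ hb, by rw [← hclseq, hpaircard]⟩,
      hclseq.symm⟩
  have hinj : ∀ r ∈ R, Set.InjOn (fun p : Pt × Pt => cls r p.1) ((Pr r : Finset (Pt × Pt)) : Set (Pt × Pt)) := by
    intro r hr p hp q hq heq
    have h1 := (hπ r hr p (Finset.mem_coe.mp hp)).2
    have h2 := (hπ r hr q (Finset.mem_coe.mp hq)).2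
    simp only at heq
    rw [h1, h2] at heq
    obtain ⟨hpB, hpG⟩ := Finset.mem_product.mp
      (Finset.mem_of_mem_filter p (Finset.mem_coe.mp hp))
    obtain ⟨hqB, hqG⟩ := Finset.mem_product.mp
      (Finset.mem_of_mem_filter q (Finset.mem_coe.mp hq))
    have e1 : p.1 = q.1 := by
      have : p.1 ∈ ({q.1, q.2} : Finset Pt) := by rw [← heq]; simp
      rcases Finset.mem_insert.mp this with h | h
      · exact h
      · exact absurd (Finset.mem_singleton.mp h ▸ hpB)
          (fun hh => (Finset.disjoint_left.mp hBG hh) hqG)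
    have e2 : p.2 = q.2 := by
      have : p.2 ∈ ({q.1, q.2} : Finset Pt) := by rw [← heq]; simp
      rcases Finset.mem_insert.mp this with h | h
      · exact absurd (h ▸ hpG) (fun hh => (Finset.disjoint_left.mp hBG hqB) hh)
      · exact Finset.mem_singleton.mp h
    exact Prod.ext e1 e2
  have hPrcard : ∀ r ∈ R, (Pr r).card ≤ n := by
    intro r hr
    calc (Pr r).card ≤ (T₂ r).card :=
          Finset.card_le_card_of_injOn _ (fun p hp => (hπ r hr p hp).1) (hinj r hr)
      _ ≤ n := hT₂card r hr
  have hcover : B ×ˢ G ⊆ R.biUnion Pr := by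
    intro p hp
    obtain ⟨hpB, hpG⟩ := Finset.mem_product.mp hp
    obtain ⟨r, hr, hcol, hseg⟩ := hpierce p.1 hpB p.2 hpG
    exact Finset.mem_biUnion.mpr ⟨r, hr, Finset.mem_filter.mpr ⟨hp, hcol, hseg⟩⟩
  have hPr_eq : ∀ r ∈ R, (Pr r).card = n := by
    have hle : n * n ≤ ∑ r ∈ R, (Pr r).card := by
      calc n * n = (B ×ˢ G).card := by rw [Finset.card_product, hB, hG]
        _ ≤ (R.biUnion Pr).card := Finset.card_le_card hcover
        _ ≤ ∑ r ∈ R, (Pr r).card := Finset.card_biUnion_le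
    have hge : ∑ r ∈ R, (Pr r).card ≤ ∑ r ∈ R, n := Finset.sum_le_sum hPrcard
    rw [Finset.sum_const, hR, smul_eq_mul] at hge
    have heq2 : ∑ r ∈ R, (Pr r).card = ∑ r ∈ R, n := by
      refine le_antisymm (by rw [Finset.sum_const, hR, smul_eq_mul]; exact hge) ?_
      rw [Finset.sum_const, hR, smul_eq_mul]; exact hle
    exact (Finset.sum_eq_sum_iff_of_le hPrcard).mp heq2
  intro r hr x hx
  have himg : (Pr r).image (fun p => cls r p.1) = T₂ r := by
    apply Finset.eq_of_subset_of_card_le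
    · intro c hc
      obtain ⟨p, hp, rfl⟩ := Finset.mem_image.mp hc
      exact (hπ r hr p hp).1
    · rw [Finset.card_image_of_injOn (hinj r hr), hPr_eq r hr]
      exact hT₂card r hr
  have hallT₂ : cls r x ∈ T₂ r := by
    have hmemT : cls r x ∈ T r := Finset.mem_image_of_mem _ hx
    by_contra hnot
    have h2n : ∑ c ∈ T₂ r, c.card = 2 * n := by
      have himgcard : (T₂ r).card = n := by
        rw [← himg, Finset.card_image_of_injOn (hinj r hr), hPr_eq r hr]
      have hconst : ∑ c ∈ T₂ r, c.card = ∑ c ∈ T₂ r, 2 :=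
        Finset.sum_congr rfl (fun c hc => (Finset.mem_filter.mp hc).2)
      rw [hconst, Finset.sum_const, himgcard, smul_eq_mul, mul_comm]
    have hsplit : ∑ c ∈ T₂ r, c.card
        + ∑ c ∈ (T r).filter (fun c => ¬ c.card = 2), c.card = ∑ c ∈ T r, c.card :=
      Finset.sum_filter_add_sum_filter_not (T r) _ _
    have hrest : ∑ c ∈ (T r).filter (fun c => ¬ c.card = 2), c.card = 0 := by
      rw [h2n, hsumT r hr] at hsplit
      omega
    have hxin : cls r x ∈ (T r).filter (fun c => ¬ c.card = 2) := by
      refine Finset.mem_filter.mpr ⟨hmemT, ?_⟩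
      intro h2
      exact hnot (Finset.mem_filter.mpr ⟨hmemT, h2⟩)
    have hc0 : (cls r x).card = 0 := Finset.sum_eq_zero_iff.mp hrest _ hxin
    have hxc : x ∈ cls r x := hself r x hx
    rw [Finset.card_eq_zero.mp hc0] at hxc
    exact absurd hxc (Finset.notMem_empty x)
  have hximg : cls r x ∈ (Pr r).image (fun p => cls r p.1) := by rw [himg]; exact hallT₂
  obtain ⟨p, hp, hpeq⟩ := Finset.mem_image.mp hximg
  have hpair := (hπ r hr p hp).2
  obtain ⟨hpBG, hcol, hseg⟩ := Finset.mem_filter.mp hp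
  obtain ⟨hpB, hpG⟩ := Finset.mem_product.mp hpBG
  have hxmem : x ∈ ({p.1, p.2} : Finset Pt) := by
    rw [← hpair, hpeq]; exact hself r x hx
  rcases Finset.mem_insert.mp hxmem with rfl | hx2
  · refine ⟨p.2, Finset.mem_union_right _ hpG, ?_, ?_, Or.inl ⟨hpB, hpG⟩, hseg⟩
    · intro h
      rw [h] at hpG
      exact (Finset.disjoint_left.mp hBG hpB) hpG
    · rw [tri₁ p.1 p.2 r] at hcol; exact hcol
  · have hx2' : x = p.2 := Finset.mem_singleton.mp hx2
    subst hx2'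
    refine ⟨p.1, Finset.mem_union_left _ hpB, ?_, ?_, Or.inr ⟨hpG, hpB⟩, ?_⟩
    · intro h
      rw [h] at hpB
      exact (Finset.disjoint_left.mp hBG hpB) hpG
    · rw [tri₁ p.1 p.2 r, tri₂ r p.1 p.2] at hcol; exact hcol
    · rw [segment_symm]; exact hseg






lemma dot_comb (a : Pt) (c₁ c₂ : ℝ) (u v : Pt) :
    dot a (c₁ • u + c₂ • v) = c₁ * dot a u + c₂ * dot a v := by
  simp [dot, Pi.add_apply, Pi.smul_apply, smul_eq_mul]; ring

lemma dot_smul' (a : Pt) (c : ℝ) (u : Pt) : dot a (c • u) = c * dot a u := by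
  simp [dot, Pi.smul_apply, smul_eq_mul]; ring

lemma comb_sub (c₁ c₂ : ℝ) (hc : c₁ + c₂ = 1) (u v q r : Pt) (h : c₁ • u + c₂ • v = q) :
    q - r = c₁ • (u - r) + c₂ • (v - r) := by
  have : q - r = c₁ • u + c₂ • v - (c₁ + c₂) • r := by rw [h, hc, one_smul]
  rw [this]; module

lemma key {n : ℕ} (hn : 2 ≤ n) (B G R : Finset Pt)
    (hB : B.card = n) (hG : G.card = n) (hR : R.card = n)
    (hBG : Disjoint B G) (hBR : Disjoint B R) (hGR : Disjoint G R)
    (hgp : GenPos ↑(B ∪ G))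
    (hpierce : ∀ b ∈ B, ∀ g ∈ G, ∃ r ∈ R,
      Collinear ℝ ({b, g, r} : Set Pt) ∧ r ∉ segment ℝ b g) :
    ∃ g ∈ G, g ∉ convexHull ℝ ((↑(B ∪ G) : Set Pt) \ {g}) := by
  classical
  by_contra hcon
  push_neg at hcon
  have hmatch := matching hn B G R hB hG hR hBG hBR hGR hgp hpierce
  have hScard : (B ∪ G).card = 2 * n := by
    rw [Finset.card_union_of_disjoint hBG, hB, hG]; ring
  have hrS : ∀ r ∈ R, r ∉ B ∪ G := by
    intro r hr hmem
    rcases Finset.mem_union.mp hmem with h | h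
    · exact (Finset.disjoint_left.mp hBR h) hr
    · exact (Finset.disjoint_left.mp hGR h) hr
  -- Part A : every red point lies in the hull
  have hRin : ∀ r ∈ R, r ∈ convexHull ℝ (↑(B ∪ G) : Set Pt) := by
    intro r hr
    by_contra hout
    obtain ⟨f, u, hfu, hsep⟩ := geometric_hahn_banach_point_closed
      (convex_convexHull ℝ _) ((B ∪ G).finite_toSet.isClosed_convexHull (𝕜 := ℝ)) hout
    set w : Pt := fun i => f (Pi.single i 1) with hw
    have hrepr : ∀ p : Pt, p = p 0 • (Pi.single 0 1 : Pt) + p 1 • (Pi.single 1 1 : Pt) := by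
      intro p; funext i; fin_cases i <;> simp [Pi.single_apply]
    have hfw : ∀ p : Pt, f p = dot w p := by
      intro p
      conv_lhs => rw [hrepr p]
      rw [map_add, map_smul, map_smul, smul_eq_mul, smul_eq_mul]
      simp [dot, hw]; ring
    have hd : ∀ x ∈ B ∪ G, 0 < dot w (x - r) := by
      intro x hx
      have h1 : u < f x := hsep x (subset_convexHull ℝ _ (Finset.mem_coe.mpr hx))
      have := hfu.trans h1
      rw [hfw x, hfw r] at this
      rw [dot_sub]; linarith
    set wp : Pt := ![-(w 1), w 0] with hwp
    have hSne : (B ∪ G).Nonempty := by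
      rw [← Finset.card_pos, hScard]; omega
    obtain ⟨x₀, hx₀S, hmin⟩ := Finset.exists_min_image (B ∪ G)
      (fun x => dot wp (x - r) / dot w (x - r)) hSne
    set a : Pt := dot w (x₀ - r) • wp - dot wp (x₀ - r) • w with ha
    have hdota : ∀ z : Pt, dot a (z - r)
        = dot w (x₀ - r) * dot wp (z - r) - dot wp (x₀ - r) * dot w (z - r) := by
      intro z
      rw [ha]
      simp [dot, Pi.sub_apply, Pi.smul_apply, smul_eq_mul]; ring
    have hge : ∀ x ∈ B ∪ G, 0 ≤ dot a (x - r) := by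
      intro x hx
      rw [hdota]
      have h1 := hmin x hx
      have h2 := hd x hx
      have h3 := hd x₀ hx₀S
      rw [div_le_div_iff₀ h3 h2] at h1
      linarith
    have hx₀0 : dot a (x₀ - r) = 0 := by rw [hdota]; ring
    have ha0 : a ≠ 0 := by
      intro h0
      have h3 := hd x₀ hx₀S
      have e0 : a 0 = 0 := by rw [h0]; rfl
      have e1 : a 1 = 0 := by rw [h0]; rfl
      rw [ha] at e0 e1
      simp [hwp, Pi.sub_apply, Pi.smul_apply, smul_eq_mul] at e0 e1
      have hww : dot w (x₀ - r) * (w 0 * w 0 + w 1 * w 1) = 0 := by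
        linear_combination (-(w 1)) * e0 + w 0 * e1
      have hwz : w 0 * w 0 + w 1 * w 1 = 0 := by
        rcases mul_eq_zero.mp hww with h' | h'
        · exact absurd h' (ne_of_gt h3)
        · exact h'
      have hw0 : w 0 = 0 := by
        have : w 0 * w 0 = 0 := by nlinarith [mul_self_nonneg (w 0), mul_self_nonneg (w 1)]
        exact mul_self_eq_zero.mp this
      have hw1 : w 1 = 0 := by
        have : w 1 * w 1 = 0 := by nlinarith [mul_self_nonneg (w 0), mul_self_nonneg (w 1)]
        exact mul_self_eq_zero.mp this
      have : dot w (x₀ - r) = 0 := by simp [dot, hw0, hw1]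
      exact absurd this (ne_of_gt h3)
    have hx₀r : x₀ ≠ r := fun h => hrS r hr (h ▸ hx₀S)
    obtain ⟨y₀, hy₀S, hy₀ne, hy₀col, hy₀colors, hy₀seg⟩ := hmatch r hr x₀ hx₀S
    have hy₀0 : dot a (y₀ - r) = 0 := by
      obtain ⟨s, hs⟩ := collinear_param (Ne.symm hx₀r) hy₀col
      rw [hs, dot_smul', hx₀0, mul_zero]
    have hzero : ∀ z ∈ B ∪ G, dot a (z - r) = 0 → z = x₀ ∨ z = y₀ := by
      intro z hzS hz0
      by_contra hne
      push_neg at hne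
      obtain ⟨hzx, hzy⟩ := hne
      have hx₀r0 : x₀ - r ≠ 0 := sub_ne_zero.mpr hx₀r
      obtain ⟨tz, htz⟩ := para ha0 hx₀0 hz0 hx₀r0
      obtain ⟨ty, hty⟩ := para ha0 hx₀0 hy₀0 hx₀r0
      have hcol3 : Collinear ℝ ({x₀, y₀, z} : Set Pt) := by
        rw [collinear_iff_of_mem (Set.mem_insert x₀ {y₀, z})]
        refine ⟨x₀ - r, ?_⟩
        intro p hp
        rcases hp with rfl | rfl | rfl
        · exact ⟨0, by simp [vadd_eq_add]⟩
        · refine ⟨ty - 1, ?_⟩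
          have : p - x₀ = (ty - 1) • (x₀ - r) := by
            rw [sub_smul, ← hty, one_smul]; abel
          rw [vadd_eq_add, ← this]; abel
        · refine ⟨tz - 1, ?_⟩
          have : p - x₀ = (tz - 1) • (x₀ - r) := by
            rw [sub_smul, ← htz, one_smul]; abel
          rw [vadd_eq_add, ← this]; abel
      exact hgp x₀ (Finset.mem_coe.mpr hx₀S) y₀ (Finset.mem_coe.mpr hy₀S)
        z (Finset.mem_coe.mpr hzS) (Ne.symm hy₀ne) (Ne.symm hzx) (Ne.symm hzy) hcol3
    -- identify green and blue points of the tangent pair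
    obtain ⟨b₀, g₀, hb₀B, hg₀G, hb₀0, hg₀0, hbgxy⟩ :
        ∃ b₀ g₀, b₀ ∈ B ∧ g₀ ∈ G ∧ dot a (b₀ - r) = 0 ∧ dot a (g₀ - r) = 0 ∧
          ((b₀ = x₀ ∧ g₀ = y₀) ∨ (b₀ = y₀ ∧ g₀ = x₀)) := by
      rcases hy₀colors with ⟨hxB, hyG⟩ | ⟨hxG, hyB⟩
      · exact ⟨x₀, y₀, hxB, hyG, hx₀0, hy₀0, Or.inl ⟨rfl, rfl⟩⟩
      · exact ⟨y₀, x₀, hyB, hxG, hy₀0, hx₀0, Or.inr ⟨rfl, rfl⟩⟩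
    have hb₀g₀ : b₀ ≠ g₀ := by
      intro h
      rw [h] at hb₀B
      exact (Finset.disjoint_left.mp hBG hb₀B) hg₀G
    have hb₀S : b₀ ∈ B ∪ G := Finset.mem_union_left _ hb₀B
    have hg₀S : g₀ ∈ B ∪ G := Finset.mem_union_right _ hg₀G
    -- g₀ is in the hull of the rest : contradiction
    have hgcon := hcon g₀ hg₀G
    have hsplit : (↑(B ∪ G) : Set Pt) \ {g₀}
        = insert b₀ ((↑(B ∪ G) : Set Pt) \ {g₀, b₀}) := by
      ext z
      simp only [Set.mem_diff, Set.mem_insert_iff, Set.mem_singleton_iff, Finset.mem_coe]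
      constructor
      · rintro ⟨hz, hzg⟩
        by_cases hzb : z = b₀
        · exact Or.inl hzb
        · exact Or.inr ⟨hz, by simp [hzg, hzb]⟩
      · rintro (rfl | ⟨hz, hz2⟩)
        · exact ⟨hb₀S, fun h => hb₀g₀ h⟩
        · refine ⟨hz, fun h => hz2 ?_⟩
          rw [h]; exact Or.inl rfl
    have hA₀ne : ((↑(B ∪ G) : Set Pt) \ {g₀, b₀}).Nonempty := by
      obtain ⟨z, hz, hzb⟩ := Finset.exists_mem_ne
        (by rw [Finset.card_erase_of_mem hg₀S, hScard]; omega) b₀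
      refine ⟨z, ?_, ?_⟩
      · exact Finset.mem_coe.mpr (Finset.mem_of_mem_erase hz)
      · simp only [Set.mem_insert_iff, Set.mem_singleton_iff]
        push_neg
        exact ⟨Finset.ne_of_mem_erase hz, hzb⟩
    have hhull : convexHull ℝ ((↑(B ∪ G) : Set Pt) \ {g₀, b₀})
        ⊆ {p : Pt | 0 < dot a (p - r)} := by
      apply convexHull_min
      · intro z hz
        obtain ⟨hzS, hz2⟩ := hz
        simp only [Set.mem_insert_iff, Set.mem_singleton_iff] at hz2
        push_neg at hz2
        have hge' := hge z (Finset.mem_coe.mp hzS)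
        rcases lt_or_eq_of_le hge' with h | h
        · exact h
        · exfalso
          rcases hzero z (Finset.mem_coe.mp hzS) h.symm with hzx | hzy
          · rcases hbgxy with ⟨hb, hg⟩ | ⟨hb, hg⟩
            · exact hz2.2 (hzx.trans hb.symm)
            · exact hz2.1 (hzx.trans hg.symm)
          · rcases hbgxy with ⟨hb, hg⟩ | ⟨hb, hg⟩
            · exact hz2.1 (hzy.trans hg.symm)
            · exact hz2.2 (hzy.trans hb.symm)
      · have : {p : Pt | 0 < dot a (p - r)} = {p : Pt | dot a r < dot a p} := by
          ext p; simp [dot_sub, sub_pos]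
        rw [this]
        exact convex_halfSpace_gt (dot_lin a) (dot a r)
    rw [hsplit, convexHull_insert hA₀ne] at hgcon
    obtain ⟨b', hb', z', hz', hgseg⟩ := mem_convexJoin.mp hgcon
    rw [Set.mem_singleton_iff] at hb'
    rw [hb'] at hgseg
    obtain ⟨c₁, c₂, hc₁, hc₂, hcs, hcq⟩ := hgseg
    have hz'pos : 0 < dot a (z' - r) := hhull hz'
    have hcomb : dot a (g₀ - r) = c₁ * dot a (b₀ - r) + c₂ * dot a (z' - r) := by
      rw [comb_sub c₁ c₂ hcs b₀ z' g₀ r hcq, dot_comb]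
    rw [hg₀0, hb₀0, mul_zero, zero_add] at hcomb
    have hc₂0 : c₂ = 0 := by
      rcases mul_eq_zero.mp hcomb.symm with h | h
      · exact h
      · exact absurd h (ne_of_gt hz'pos)
    have hc₁1 : c₁ = 1 := by linarith
    rw [hc₂0, hc₁1, one_smul, zero_smul, add_zero] at hcq
    exact hb₀g₀ hcq
  -- Part B : generic direction
  set D : Finset Pt := (B ∪ G) ∪ R with hD
  set F : Finset ℝ := (D ×ˢ D).image
    (fun pq => (pq.2 0 - pq.1 0) / (pq.1 1 - pq.2 1)) with hF
  obtain ⟨t, ht⟩ := Infinite.exists_notMem_finset F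
  set lf : Pt → ℝ := fun p => p 0 + t * p 1 with hlf
  have hlfmap : IsLinearMap ℝ lf := by
    constructor
    · intro x y; simp [hlf, Pi.add_apply]; ring
    · intro c x; simp [hlf, Pi.smul_apply, smul_eq_mul]; ring
  have hinj : ∀ p ∈ D, ∀ q ∈ D, p ≠ q → lf p ≠ lf q := by
    intro p hp q hq hne heq
    simp only [hlf] at heq
    by_cases h1 : p 1 = q 1
    · have h0 : p 0 = q 0 := by rw [h1] at heq; linarith
      exact hne (ext2 h0 h1)
    · apply ht
      refine Finset.mem_image.mpr ⟨(p, q), Finset.mem_product.mpr ⟨hp, hq⟩, ?_⟩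
      show (q 0 - p 0) / (p 1 - q 1) = t
      rw [div_eq_iff (sub_ne_zero.mpr h1)]
      linear_combination -heq
  have hSD : ∀ x ∈ B ∪ G, x ∈ D := fun x hx => Finset.mem_union_left _ hx
  have hRD : ∀ r ∈ R, r ∈ D := fun r hr => Finset.mem_union_right _ hr
  have hcomb2 : ∀ (c : ℝ) (x y r : Pt), y - r = c • (x - r) →
      lf y - lf r = c * (lf x - lf r) := by
    intro c x y r heq
    have e0 : y 0 - r 0 = c * (x 0 - r 0) := by
      simpa [Pi.sub_apply, Pi.smul_apply, smul_eq_mul] using congrFun heq 0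
    have e1 : y 1 - r 1 = c * (x 1 - r 1) := by
      simpa [Pi.sub_apply, Pi.smul_apply, smul_eq_mul] using congrFun heq 1
    simp only [hlf]
    linear_combination e0 + t * e1
  have hcomb3 : ∀ (c₁ c₂ : ℝ) (u v q : Pt), c₁ • u + c₂ • v = q →
      lf q = c₁ * lf u + c₂ * lf v := by
    intro c₁ c₂ u v q heq
    have e0 : c₁ * u 0 + c₂ * v 0 = q 0 := by
      simpa [Pi.add_apply, Pi.smul_apply, smul_eq_mul] using congrFun heq 0
    have e1 : c₁ * u 1 + c₂ * v 1 = q 1 := by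
      simpa [Pi.add_apply, Pi.smul_apply, smul_eq_mul] using congrFun heq 1
    simp only [hlf]
    linear_combination -e0 - t * e1
  have hSne : (B ∪ G).Nonempty := by
    rw [← Finset.card_pos, hScard]; omega
  obtain ⟨b₁, hb₁S, hb₁min⟩ := Finset.exists_min_image (B ∪ G) lf hSne
  obtain ⟨b₀, hb₀S, hb₀max⟩ := Finset.exists_max_image (B ∪ G) lf hSne
  have hb₁strict : ∀ x ∈ B ∪ G, x ≠ b₁ → lf b₁ < lf x := fun x hx hne =>
    lt_of_le_of_ne (hb₁min x hx) (hinj b₁ (hSD b₁ hb₁S) x (hSD x hx) (Ne.symm hne))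
  have hb₀strict : ∀ x ∈ B ∪ G, x ≠ b₀ → lf x < lf b₀ := fun x hx hne =>
    lt_of_le_of_ne (hb₀max x hx) (hinj x (hSD x hx) b₀ (hSD b₀ hb₀S) hne)
  have hminhull : ∀ q, q ∈ convexHull ℝ (↑(B ∪ G) : Set Pt) → q ≠ b₁ → lf b₁ < lf q := by
    intro q hq hne
    have hsplit : (↑(B ∪ G) : Set Pt) = insert b₁ ((↑(B ∪ G) : Set Pt) \ {b₁}) := by
      rw [Set.insert_diff_singleton, Set.insert_eq_self.mpr (Finset.mem_coe.mpr hb₁S)]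
    have hAne : ((↑(B ∪ G) : Set Pt) \ {b₁}).Nonempty := by
      obtain ⟨z, hz, hzne⟩ := Finset.exists_mem_ne (by omega : 1 < (B ∪ G).card) b₁
      exact ⟨z, Finset.mem_coe.mpr hz, hzne⟩
    rw [hsplit, convexHull_insert hAne] at hq
    obtain ⟨b', hb', z', hz', hqseg⟩ := mem_convexJoin.mp hq
    rw [Set.mem_singleton_iff] at hb'
    rw [hb'] at hqseg
    have hz'gt : lf b₁ < lf z' := by
      have hsub2 : convexHull ℝ ((↑(B ∪ G) : Set Pt) \ {b₁}) ⊆ {p : Pt | lf b₁ < lf p} := by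
        apply convexHull_min
        · rintro x ⟨hx, hxne⟩
          exact hb₁strict x (Finset.mem_coe.mp hx) hxne
        · exact convex_halfSpace_gt hlfmap (lf b₁)
      exact hsub2 hz'
    obtain ⟨c₁, c₂, hc₁, hc₂, hcs, hcq⟩ := hqseg
    have he : lf q = c₁ * lf b₁ + c₂ * lf z' := hcomb3 c₁ c₂ b₁ z' q hcq
    rcases eq_or_lt_of_le hc₂ with h0 | h0
    · exfalso
      apply hne
      rw [← hcq, ← h0, zero_smul, add_zero]
      have : c₁ = 1 := by linarith
      rw [this, one_smul]
    · have hc₁e : c₁ * lf b₁ = lf b₁ - c₂ * lf b₁ := by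
        rw [show c₁ = 1 - c₂ by linarith]; ring
      linarith [mul_pos h0 (sub_pos.mpr hz'gt), hc₁e]
  have hmaxhull : ∀ q, q ∈ convexHull ℝ (↑(B ∪ G) : Set Pt) → q ≠ b₀ → lf q < lf b₀ := by
    intro q hq hne
    have hsplit : (↑(B ∪ G) : Set Pt) = insert b₀ ((↑(B ∪ G) : Set Pt) \ {b₀}) := by
      rw [Set.insert_diff_singleton, Set.insert_eq_self.mpr (Finset.mem_coe.mpr hb₀S)]
    have hAne : ((↑(B ∪ G) : Set Pt) \ {b₀}).Nonempty := by
      obtain ⟨z, hz, hzne⟩ := Finset.exists_mem_ne (by omega : 1 < (B ∪ G).card) b₀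
      exact ⟨z, Finset.mem_coe.mpr hz, hzne⟩
    rw [hsplit, convexHull_insert hAne] at hq
    obtain ⟨b', hb', z', hz', hqseg⟩ := mem_convexJoin.mp hq
    rw [Set.mem_singleton_iff] at hb'
    rw [hb'] at hqseg
    have hz'lt : lf z' < lf b₀ := by
      have hsub2 : convexHull ℝ ((↑(B ∪ G) : Set Pt) \ {b₀}) ⊆ {p : Pt | lf p < lf b₀} := by
        apply convexHull_min
        · rintro x ⟨hx, hxne⟩
          exact hb₀strict x (Finset.mem_coe.mp hx) hxne
        · exact convex_halfSpace_lt hlfmap (lf b₀)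
      exact hsub2 hz'
    obtain ⟨c₁, c₂, hc₁, hc₂, hcs, hcq⟩ := hqseg
    have he : lf q = c₁ * lf b₀ + c₂ * lf z' := hcomb3 c₁ c₂ b₀ z' q hcq
    rcases eq_or_lt_of_le hc₂ with h0 | h0
    · exfalso
      apply hne
      rw [← hcq, ← h0, zero_smul, add_zero]
      have : c₁ = 1 := by linarith
      rw [this, one_smul]
    · have hc₁e : c₁ * lf b₀ = lf b₀ - c₂ * lf b₀ := by
        rw [show c₁ = 1 - c₂ by linarith]; ring
      linarith [mul_pos h0 (sub_pos.mpr hz'lt), hc₁e]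
  have hb₁B : b₁ ∈ B := by
    rcases Finset.mem_union.mp hb₁S with h' | h'
    · exact h'
    · exfalso
      have hmem := hcon b₁ h'
      have hsub2 : convexHull ℝ ((↑(B ∪ G) : Set Pt) \ {b₁}) ⊆ {p : Pt | lf b₁ < lf p} := by
        apply convexHull_min
        · rintro x ⟨hx, hxne⟩
          exact hb₁strict x (Finset.mem_coe.mp hx) hxne
        · exact convex_halfSpace_gt hlfmap (lf b₁)
      exact lt_irrefl (lf b₁) (hsub2 hmem)
  have hb₀B : b₀ ∈ B := by
    rcases Finset.mem_union.mp hb₀S with h' | h'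
    · exact h'
    · exfalso
      have hmem := hcon b₀ h'
      have hsub2 : convexHull ℝ ((↑(B ∪ G) : Set Pt) \ {b₀}) ⊆ {p : Pt | lf p < lf b₀} := by
        apply convexHull_min
        · rintro x ⟨hx, hxne⟩
          exact hb₀strict x (Finset.mem_coe.mp hx) hxne
        · exact convex_halfSpace_lt hlfmap (lf b₀)
      exact lt_irrefl (lf b₀) (hsub2 hmem)
  have hGne : G.Nonempty := by rw [← Finset.card_pos, hG]; omega
  have hRne : R.Nonempty := by rw [← Finset.card_pos, hR]; omega
  obtain ⟨g₁, hg₁G, hg₁min⟩ := Finset.exists_min_image G lf hGne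
  obtain ⟨rh, hrhR, hrhmin⟩ := Finset.exists_min_image R lf hRne
  -- step 3 : the lowest red point is above some green point
  have hb₁rh : b₁ ≠ rh := fun e => (Finset.disjoint_left.mp hBR hb₁B) (e ▸ hrhR)
  obtain ⟨y, hyS, hyne, hycol, hycolors, hyseg⟩ := hmatch rh hrhR b₁ hb₁S
  have hyG : y ∈ G := by
    rcases hycolors with ⟨_, hyG⟩ | ⟨hb₁G, _⟩
    · exact hyG
    · exact absurd hb₁G (Finset.disjoint_left.mp hBG hb₁B)
  obtain ⟨t', ht'pos, ht'⟩ := sameside hb₁rh hycol hyseg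
  have hb₁lt : lf b₁ < lf rh := hminhull rh (hRin rh hrhR) (Ne.symm hb₁rh)
  have hyeq : lf y - lf rh = t' * (lf b₁ - lf rh) := hcomb2 t' b₁ y rh ht'
  have hylt : lf y < lf rh := by nlinarith
  have hg₁lt : lf g₁ < lf rh := lt_of_le_of_lt (hg₁min y hyG) hylt
  -- step 5 : the red point on the line from the top blue to the lowest green
  obtain ⟨r, hrR, hrcol, hrseg⟩ := hpierce b₀ hb₀B g₁ hg₁G
  have hb₀r : b₀ ≠ r := fun e => (Finset.disjoint_left.mp hBR hb₀B) (e ▸ hrR)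
  rw [tri₁ b₀ g₁ r] at hrcol
  obtain ⟨t'', ht''pos, ht''⟩ := sameside hb₀r hrcol hrseg
  have hrlt : lf r < lf b₀ := hmaxhull r (hRin r hrR) (Ne.symm hb₀r)
  have he5 : lf g₁ - lf r = t'' * (lf b₀ - lf r) := hcomb2 t'' b₀ g₁ r ht''
  have hrg : lf r < lf g₁ := by nlinarith
  have hrr : lf rh ≤ lf r := hrhmin r hrR
  linarith


end
end Stmt14Aux

theorem stmt14 (n : ℕ) (hn : 2 ≤ n) (B G R : Finset Pt)
    (hB : B.card = n) (hG : G.card = n) (hR : R.card = n)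
    (hBG : Disjoint B G) (hBR : Disjoint B R) (hGR : Disjoint G R)
    (hgp : GenPos ↑(B ∪ G))
    (hpierce : ∀ b ∈ B, ∀ g ∈ G, ∃ r ∈ R,
      Collinear ℝ ({b, g, r} : Set Pt) ∧ r ∉ segment ℝ b g) :
    (∃ b ∈ B, b ∉ convexHull ℝ ((↑(B ∪ G) : Set Pt) \ {b})) ∧
    (∃ g ∈ G, g ∉ convexHull ℝ ((↑(B ∪ G) : Set Pt) \ {g})) := by
  constructor
  · have hgp' : GenPos ↑(G ∪ B) := by rw [Finset.union_comm]; exact hgp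
    have hpierce' : ∀ g ∈ G, ∀ b ∈ B, ∃ r ∈ R,
        Collinear ℝ ({g, b, r} : Set Pt) ∧ r ∉ segment ℝ g b := by
      intro g hg b hb
      obtain ⟨r, hr, hcol, hseg⟩ := hpierce b hb g hg
      refine ⟨r, hr, ?_, by rw [segment_symm]; exact hseg⟩
      have hset : ({g, b, r} : Set Pt) = {b, g, r} := by rw [Set.insert_comm]
      rw [hset]; exact hcol
    obtain ⟨b, hb, hbv⟩ := Stmt14Aux.key hn G B R hG hB hR hBG.symm hGR hBR hgp' hpierce'
    refine ⟨b, hb, ?_⟩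
    rwa [Finset.union_comm G B] at hbv
  · exact Stmt14Aux.key hn B G R hB hG hR hBG hBR hGR hgp hpierce
end

section
/- For n even, the vertex set P of a regular n-gon admits a set R of n points disjoint from P such that every line through two points of P passes through a point of R, and moreover the point of R can always be taken outside the segment determined by the two points: take R to be the n points at infinity corresponding to the n directions spanned by P. -/
open Real

noncomputable def wdir (n : ℕ) (k : ZMod n) : Pt :=
  ![-Real.sin (π * k.val / n), Real.cos (π * k.val / n)]

lemma wdir_ne_zero (n : ℕ) (k : ZMod n) : wdir n k ≠ 0 := by
  intro h
  have h1 : -Real.sin (π * k.val / n) = 0 := by simpa [wdir] using congrFun h 0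
  have h2 : Real.cos (π * k.val / n) = 0 := by simpa [wdir] using congrFun h 1
  have h3 := Real.sin_sq_add_cos_sq (π * k.val / n)
  nlinarith [h1, h2, h3]

lemma theta_mem (n : ℕ) (hn : 0 < n) (k : ZMod n) :
    π * k.val / n ∈ Set.Ico 0 π := by
  have : NeZero n := ⟨hn.ne'⟩
  have hk : k.val < n := ZMod.val_lt k
  have hn0 : (0:ℝ) < n := by exact_mod_cast hn
  constructor
  · positivity
  · rw [div_lt_iff₀ hn0]
    have : (k.val : ℝ) < n := by exact_mod_cast hk
    nlinarith [Real.pi_pos]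

lemma wdir_inj (n : ℕ) (hn : 0 < n) : Function.Injective
    (fun k : ZMod n => Projectivization.mk ℝ (wdir n k) (wdir_ne_zero n k)) := by
  have : NeZero n := ⟨hn.ne'⟩
  intro k l h
  simp only [Projectivization.mk_eq_mk_iff'] at h
  obtain ⟨a, ha⟩ := h
  set θk := π * k.val / n with hθk
  set θl := π * l.val / n with hθl
  have h1 : a * (-Real.sin θl) = -Real.sin θk := by
    have := congrFun ha 0
    simpa only [wdir, Pi.smul_apply, Matrix.cons_val_zero, smul_eq_mul] using this
  have h2 : a * Real.cos θl = Real.cos θk := by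
    have := congrFun ha 1
    simpa only [wdir, Pi.smul_apply, Matrix.cons_val_one, Matrix.head_cons, Matrix.cons_val_zero, smul_eq_mul]
      using this
  have hs' : a * Real.sin θl = Real.sin θk := by linarith
  have hk := theta_mem n hn k
  have hl := theta_mem n hn l
  have pk := Real.sin_sq_add_cos_sq θk
  have pl := Real.sin_sq_add_cos_sq θl
  have hasq : a ^ 2 = 1 := by
    have e : a ^ 2 * (Real.sin θl ^ 2 + Real.cos θl ^ 2)
        = Real.sin θk ^ 2 + Real.cos θk ^ 2 := by
      rw [← hs', ← h2]; ring
    rw [pl, pk, mul_one] at e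
    exact e
  have ha2 : (a - 1) * (a + 1) = 0 := by linear_combination hasq
  have hn0 : (0:ℝ) < n := by exact_mod_cast hn
  have key : θk = θl := by
    rcases mul_eq_zero.mp ha2 with h' | h'
    · have ha1 : a = 1 := by linarith
      subst ha1
      have hc : Real.cos θk = Real.cos θl := by linarith
      exact Real.injOn_cos ⟨hk.1, hk.2.le⟩ ⟨hl.1, hl.2.le⟩ hc
    · have ha1 : a = -1 := by linarith
      subst ha1
      have hsk : Real.sin θk = -Real.sin θl := by linarith
      have hsk0 : 0 ≤ Real.sin θk := Real.sin_nonneg_of_nonneg_of_le_pi hk.1 hk.2.le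
      have hsl0 : 0 ≤ Real.sin θl := Real.sin_nonneg_of_nonneg_of_le_pi hl.1 hl.2.le
      have hsk' : Real.sin θk = 0 := le_antisymm (by linarith) hsk0
      have hsl' : Real.sin θl = 0 := le_antisymm (by linarith) hsl0
      have hθk0 : θk = 0 :=
        (Real.sin_eq_zero_iff_of_lt_of_lt (by linarith [Real.pi_pos, hk.1]) hk.2).mp hsk'
      have hθl0 : θl = 0 :=
        (Real.sin_eq_zero_iff_of_lt_of_lt (by linarith [Real.pi_pos, hl.1]) hl.2).mp hsl'
      rw [hθk0, hθl0]
  have hvals : (k.val : ℝ) = l.val := by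
    have h' := key
    rw [hθk, hθl, div_eq_div_iff hn0.ne' hn0.ne'] at h'
    have h'' := mul_right_cancel₀ hn0.ne' h'
    exact mul_left_cancel₀ Real.pi_ne_zero h''
  have : k.val = l.val := by exact_mod_cast hvals
  exact ZMod.val_injective n this

lemma key_smul (n : ℕ) (hn : 2 ≤ n) (v : ZMod n → Pt)
    (hv : ∀ i : ZMod n, v i = ![Real.cos (2 * π * i.val / n), Real.sin (2 * π * i.val / n)])
    (i j : ZMod n) (hij : i ≠ j) :
    ∃ a : ℝ, a ≠ 0 ∧ v i - v j = a • wdir n (i + j) := by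
  have hnpos : 0 < n := by omega
  have : NeZero n := ⟨hnpos.ne'⟩
  have hn0 : (0:ℝ) < n := by exact_mod_cast hnpos
  set s := i.val with hs
  set t := j.val with ht
  have hslt : s < n := ZMod.val_lt i
  have htlt : t < n := ZMod.val_lt j
  have hst : s ≠ t := fun h => hij (ZMod.val_injective n h)
  set m := (i + j).val with hm
  have hmod : m = (s + t) % n := ZMod.val_add i j
  obtain ⟨c, hc2, hsum⟩ : ∃ c, c < 2 ∧ s + t = m + n * c := by
    refine ⟨(s + t) / n, Nat.div_lt_of_lt_mul (by omega), ?_⟩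
    rw [hmod]; exact (Nat.mod_add_div (s + t) n).symm
  set δ := π * ((s:ℝ) - t) / n with hδ
  set θ := π * (m:ℝ) / n with hθ
  -- sin δ ≠ 0
  have hsltR : (s:ℝ) < n := by exact_mod_cast hslt
  have htltR : (t:ℝ) < n := by exact_mod_cast htlt
  have hδlt : δ < π := by
    rw [hδ, div_lt_iff₀ hn0]
    nlinarith [Real.pi_pos, Nat.cast_nonneg (α := ℝ) t]
  have hδgt : -π < δ := by
    rw [hδ, lt_div_iff₀ hn0]
    nlinarith [Real.pi_pos, Nat.cast_nonneg (α := ℝ) s]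
  have hδne : δ ≠ 0 := by
    rw [hδ]
    have hstR : (s:ℝ) ≠ t := by exact_mod_cast hst
    have hπ := Real.pi_pos
    intro h
    apply hstR
    have h' := (div_eq_zero_iff.mp h).resolve_right hn0.ne'
    rcases mul_eq_zero.mp h' with h'' | h''
    · exact absurd h'' hπ.ne'
    · linarith [sub_eq_zero.mp h'']
  have hsinδ : Real.sin δ ≠ 0 := fun h =>
    hδne ((Real.sin_eq_zero_iff_of_lt_of_lt hδgt hδlt).mp h)
  -- components
  have hσ : π * ((s:ℝ) + t) / n = θ + π * c := by
    have hcast : (s:ℝ) + t = (m:ℝ) + n * c := by exact_mod_cast hsum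
    rw [hcast, hθ]
    field_simp
  have hcomp0 : Real.cos (2 * π * s / n) - Real.cos (2 * π * t / n) =
      -2 * Real.sin (θ + π * c) * Real.sin δ := by
    rw [Real.cos_sub_cos, ← hσ, hδ]
    congr 2 <;> field_simp
  have hcomp1 : Real.sin (2 * π * s / n) - Real.sin (2 * π * t / n) =
      2 * Real.sin δ * Real.cos (θ + π * c) := by
    rw [Real.sin_sub_sin, ← hσ, hδ]
    congr 2 <;> field_simp
  interval_cases c
  · have e0 : Real.sin (θ + π * ((0:ℕ):ℝ)) = Real.sin θ := by norm_num
    have e1 : Real.cos (θ + π * ((0:ℕ):ℝ)) = Real.cos θ := by norm_num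
    rw [e0] at hcomp0
    rw [e1] at hcomp1
    refine ⟨2 * Real.sin δ, mul_ne_zero two_ne_zero hsinδ, ?_⟩
    funext x
    fin_cases x
    · simp only [hv, wdir, Pi.sub_apply, Pi.smul_apply, Fin.mk_zero, Matrix.cons_val_zero, smul_eq_mul,
        ← hs, ← ht, ← hm]
      rw [hcomp0, ← hθ]
      ring
    · simp only [hv, wdir, Pi.sub_apply, Pi.smul_apply, Fin.mk_one, Matrix.cons_val_one, Matrix.head_cons, Matrix.cons_val_zero,
        smul_eq_mul, ← hs, ← ht, ← hm]
      rw [hcomp1, ← hθ]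
  · have e0 : Real.sin (θ + π * ((1:ℕ):ℝ)) = -Real.sin θ := by
      rw [Nat.cast_one, mul_one, Real.sin_add_pi]
    have e1 : Real.cos (θ + π * ((1:ℕ):ℝ)) = -Real.cos θ := by
      rw [Nat.cast_one, mul_one, Real.cos_add_pi]
    rw [e0] at hcomp0
    rw [e1] at hcomp1
    refine ⟨-(2 * Real.sin δ), neg_ne_zero.mpr (mul_ne_zero two_ne_zero hsinδ), ?_⟩
    funext x
    fin_cases x
    · simp only [hv, wdir, Pi.sub_apply, Pi.smul_apply, Fin.mk_zero, Matrix.cons_val_zero, smul_eq_mul,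
        ← hs, ← ht, ← hm]
      rw [hcomp0, ← hθ]
      ring
    · simp only [hv, wdir, Pi.sub_apply, Pi.smul_apply, Fin.mk_one, Matrix.cons_val_one, Matrix.head_cons, Matrix.cons_val_zero,
        smul_eq_mul, ← hs, ← ht, ← hm]
      rw [hcomp1, ← hθ]
      ring

theorem stmt18 (n : ℕ) (hn : 2 ≤ n) (heven : Even n)
    (v : ZMod n → Pt)
    (hv : ∀ i : ZMod n, v i = ![Real.cos (2 * π * i.val / n), Real.sin (2 * π * i.val / n)]) :
    -- the directions of lines spanned by the vertices of the regular n-gon form a set R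
    -- of exactly n points on the line at infinity, and every spanned line meets R there
    -- (hence outside the segment determined by its two spanning points):
    ∃ R : Set (Projectivization ℝ Pt), R.ncard = n ∧
      ∀ i j : ZMod n, i ≠ j → ∃ h : v i - v j ≠ 0, Projectivization.mk ℝ (v i - v j) h ∈ R := by
  have hnpos : 0 < n := by omega
  have : NeZero n := ⟨hnpos.ne'⟩
  set f := fun k : ZMod n => Projectivization.mk ℝ (wdir n k) (wdir_ne_zero n k) with hf
  refine ⟨Set.range f, ?_, ?_⟩
  · rw [← Set.image_univ, Set.ncard_image_of_injective _ (wdir_inj n hnpos),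
      Set.ncard_univ, Nat.card_zmod]
  · intro i j hij
    obtain ⟨a, ha0, ha⟩ := key_smul n hn v hv i j hij
    have hne : v i - v j ≠ 0 := by
      rw [ha]
      exact smul_ne_zero ha0 (wdir_ne_zero n (i + j))
    refine ⟨hne, ⟨i + j, ?_⟩⟩
    rw [hf]
    rw [eq_comm, Projectivization.mk_eq_mk_iff']
    exact ⟨a, ha.symm⟩
end
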